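/- Let θ > 4 and define f : ℝ → ℝ by f(s) = s^{θ−1}(e^{s²} − 1) + (2/θ) s^{θ+1} e^{s²} for s > 0 and f(s) = 0 for s ≤ 0. Then: (i) F(s) = (s^θ/θ)(e^{s²} − 1) for every s ≥ 0; (ii) θ F(s) ≤ s f(s) for every s > 0; (iii) the map s ↦ f(s)/s³ is positive and nondecreasing on (0,∞). -/

import Mathlib

open Real

theorem stmt_16 (θ : ℝ) (hθ : 4 < θ)
    (f F : ℝ → ℝ)
    (hf : ∀ s : ℝ, f s = if 0 < s then
        s ^ (θ - 1) * (Real.exp (s ^ 2) - 1) + (2 / θ) * s ^ (θ + 1) * Real.exp (s ^ 2)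
      else 0)
    (hF : ∀ s : ℝ, F s = ∫ τ in (0:ℝ)..s, f τ) :
    (∀ s : ℝ, 0 ≤ s → F s = s ^ θ / θ * (Real.exp (s ^ 2) - 1)) ∧
    (∀ s : ℝ, 0 < s → θ * F s ≤ s * f s) ∧
    (∀ s : ℝ, 0 < s → 0 < f s / s ^ 3) ∧
    MonotoneOn (fun s => f s / s ^ 3) (Set.Ioi (0 : ℝ)) := by
  have hθ0 : (0:ℝ) < θ := by linarith
  -- nice formula for f on positives
  have hfpos : ∀ s : ℝ, 0 < s → f s =
      s ^ (θ - 1) * (Real.exp (s ^ 2) - 1) + (2 / θ) * s ^ (θ + 1) * Real.exp (s ^ 2) := by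
    intro s hs; rw [hf s, if_pos hs]
  set G : ℝ → ℝ := fun x => x ^ θ / θ * (Real.exp (x ^ 2) - 1) with hG
  -- the "nice" continuous version of f
  set g : ℝ → ℝ := fun s =>
      s ^ (θ - 1) * (Real.exp (s ^ 2) - 1) + (2 / θ) * s ^ (θ + 1) * Real.exp (s ^ 2) with hg
  have hgcont : Continuous g := by
    apply Continuous.add
    · exact (Real.continuous_rpow_const (by linarith)).mul
        ((Real.continuous_exp.comp (continuous_pow 2)).sub continuous_const)
    · exact (continuous_const.mul (Real.continuous_rpow_const (by linarith))).mul
        (Real.continuous_exp.comp (continuous_pow 2))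
  have hGderiv : ∀ x : ℝ, 0 < x → HasDerivAt G (g x) x := by
    intro x hx
    have h1 : HasDerivAt (fun x : ℝ => x ^ θ) (θ * x ^ (θ - 1)) x :=
      Real.hasDerivAt_rpow_const (Or.inl hx.ne')
    have h2 : HasDerivAt (fun x : ℝ => Real.exp (x ^ 2)) ((2 * x) * Real.exp (x ^ 2)) x := by
      have := (hasDerivAt_pow 2 x).exp
      simpa [mul_comm] using this
    have h3 := ((h1.div_const θ).mul (h2.sub_const 1))
    convert h3 using 1
    · rfl
    · rfl
    · rfl
    rw [hg]
    have hx1 : x ^ (θ + 1) = x ^ θ * x := by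
      rw [Real.rpow_add hx, Real.rpow_one]
    simp only [hx1]
    field_simp
  -- Part (i)
  have part1 : ∀ s : ℝ, 0 ≤ s → F s = s ^ θ / θ * (Real.exp (s ^ 2) - 1) := by
    intro s hs
    rcases eq_or_lt_of_le hs with rfl | hs
    · simp [hF 0, Real.zero_rpow hθ0.ne']
    · have hfg : Set.EqOn f g (Set.Icc 0 s) := by
        intro x hx
        rcases eq_or_lt_of_le hx.1 with rfl | hx0
        · rw [hf, if_neg (lt_irrefl 0), hg]
          simp [Real.zero_rpow (by linarith : θ - 1 ≠ 0),
            Real.zero_rpow (by linarith : θ + 1 ≠ 0)]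
        · exact hfpos x hx0
      have hint : IntervalIntegrable f MeasureTheory.volume 0 s := by
        apply ContinuousOn.intervalIntegrable
        rw [Set.uIcc_of_le hs.le]
        exact hgcont.continuousOn.congr hfg
      have hGcont : ContinuousOn G (Set.Icc 0 s) := by
        apply ContinuousOn.mul
        · exact fun x _ => ((Real.continuousAt_rpow_const x θ
            (Or.inr hθ0.le)).div_const θ).continuousWithinAt
        · exact ((Real.continuous_exp.comp (continuous_pow 2)).sub
            continuous_const).continuousOn
      have := intervalIntegral.integral_eq_sub_of_hasDeriv_right_of_le hs.le hGcont
        (fun x hx => ((hGderiv x hx.1).hasDerivWithinAt)) ?_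
      · rw [hF s]
        have hFint : ∫ τ in (0:ℝ)..s, f τ = ∫ τ in (0:ℝ)..s, g τ := by
          apply intervalIntegral.integral_congr
          rw [Set.uIcc_of_le hs.le]; exact hfg
        rw [hFint, this, hG]
        simp [Real.zero_rpow hθ0.ne']
      · apply ContinuousOn.intervalIntegrable
        exact hgcont.continuousOn
  refine ⟨part1, ?_, ?_, ?_⟩
  -- Part (ii)
  · intro s hs
    rw [part1 s hs.le, hfpos s hs]
    have hs1 : s * s ^ (θ - 1) = s ^ θ := by
      have h := Real.rpow_add hs 1 (θ - 1)
      rw [Real.rpow_one] at h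
      rw [← h]; congr 1; ring
    have hs2 : s * s ^ (θ + 1) = s ^ (θ + 2) := by
      have h := Real.rpow_add hs 1 (θ + 1)
      rw [Real.rpow_one] at h
      rw [← h]; congr 1; ring
    have key : θ * (s ^ θ / θ * (Real.exp (s ^ 2) - 1))
        = s ^ θ * (Real.exp (s ^ 2) - 1) := by field_simp
    have expand : s * (s ^ (θ - 1) * (Real.exp (s ^ 2) - 1)
        + 2 / θ * s ^ (θ + 1) * Real.exp (s ^ 2))
        = s ^ θ * (Real.exp (s ^ 2) - 1) + 2 / θ * s ^ (θ + 2) * Real.exp (s ^ 2) := by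
      rw [← hs1, ← hs2]; ring
    rw [key, expand]
    have : 0 ≤ 2 / θ * s ^ (θ + 2) * Real.exp (s ^ 2) := by positivity
    linarith
  -- Part (iii) positivity
  · intro s hs
    rw [hfpos s hs]
    have h1 : (0:ℝ) < Real.exp (s ^ 2) - 1 := by
      have : (1:ℝ) < Real.exp (s ^ 2) := by
        rw [← Real.exp_zero]; exact Real.exp_lt_exp.mpr (by positivity)
      linarith
    have h2 : (0:ℝ) < s ^ (θ - 1) := Real.rpow_pos_of_pos hs _
    have h3 : (0:ℝ) < s ^ (θ + 1) := Real.rpow_pos_of_pos hs _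
    positivity
  -- Part (iii) monotonicity
  · have hrepr : ∀ s : ℝ, 0 < s → f s / s ^ 3 =
        s ^ (θ - 4) * (Real.exp (s ^ 2) - 1) + (2 / θ) * (s ^ (θ - 2) * Real.exp (s ^ 2)) := by
      intro s hs
      rw [hfpos s hs]
      have h3 : (s : ℝ) ^ (3:ℕ) = s ^ ((3:ℕ):ℝ) := (Real.rpow_natCast s 3).symm
      have e1 : s ^ (θ - 1) = s ^ (θ - 4) * s ^ (3:ℕ) := by
        rw [h3, ← Real.rpow_add hs]; congr 1; push_cast; ring
      have e2 : s ^ (θ + 1) = s ^ (θ - 2) * s ^ (3:ℕ) := by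
        rw [h3, ← Real.rpow_add hs]; congr 1; push_cast; ring
      rw [e1, e2]
      field_simp
    intro x hx y hy hxy
    simp only [Set.mem_Ioi] at hx hy
    simp only
    rw [hrepr x hx, hrepr y hy]
    have hE : Real.exp (x ^ 2) ≤ Real.exp (y ^ 2) := by
      apply Real.exp_le_exp.mpr
      exact pow_le_pow_left₀ hx.le hxy 2
    have h1 : x ^ (θ - 4) ≤ y ^ (θ - 4) :=
      Real.rpow_le_rpow hx.le hxy (by linarith)
    have h2 : x ^ (θ - 2) ≤ y ^ (θ - 2) :=
      Real.rpow_le_rpow hx.le hxy (by linarith)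
    have hE1 : (0:ℝ) ≤ Real.exp (x ^ 2) - 1 := by
      have : (1:ℝ) ≤ Real.exp (x ^ 2) := Real.one_le_exp (by positivity)
      linarith
    have hp1 : (0:ℝ) ≤ x ^ (θ - 4) := (Real.rpow_pos_of_pos hx _).le
    have hp2 : (0:ℝ) ≤ x ^ (θ - 2) := (Real.rpow_pos_of_pos hx _).le
    have hE1' : (1:ℝ) ≤ Real.exp (x ^ 2) := Real.one_le_exp (by positivity)
    gcongr <;> first
      | positivity
      | linarith
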